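/- Let x, y, z ∈ [0,1] satisfy the triangle inequalities x ≤ y + z, y ≤ z + x, and z ≤ x + y, and set M = max{1/2, 1−x, 1−y, 1−z}. Then 9·( x²/(1+x) + y²/(1+y) + M²/(1+M) ) ≥ 3. -/
import Mathlib

lemma aux (x y m : ℝ) (hx0 : 0 ≤ x) (hx1 : x ≤ 1) (hy0 : 0 ≤ y) (hy1 : y ≤ 1)
    (hm0 : 1/2 ≤ m) (hm1 : m ≤ 1) (hmx : 1 - x ≤ m) (hmy : 1 - y ≤ m) :
    x ^ 2 / (1 + x) + y ^ 2 / (1 + y) + m ^ 2 / (1 + m) ≥ 1/3 := by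
  have px : (0:ℝ) < 1 + x := by linarith
  have py : (0:ℝ) < 1 + y := by linarith
  have pm : (0:ℝ) < 1 + m := by linarith
  rw [ge_iff_le, div_add_div _ _ (ne_of_gt px) (ne_of_gt py), div_add_div _ _ (by positivity) (ne_of_gt pm), le_div_iff₀ (by positivity)]
  ring_nf
  nlinarith [sq_nonneg (x - (1-m)), sq_nonneg (y - (1-m)), sq_nonneg (x-y), sq_nonneg (m - 1/2), sq_nonneg (m-1), mul_nonneg hx0 hy0, mul_nonneg (mul_nonneg hx0 hy0) (by linarith : (0:ℝ) ≤ m), sq_nonneg (x + y - 2*(1-m))]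

theorem triangle_ppo (x y z : ℝ)
    (hx : x ∈ Set.Icc (0 : ℝ) 1) (hy : y ∈ Set.Icc (0 : ℝ) 1) (hz : z ∈ Set.Icc (0 : ℝ) 1)
    (hxyz : x ≤ y + z) (hyzx : y ≤ z + x) (hzxy : z ≤ x + y) :
    9 * (x ^ 2 / (1 + x) + y ^ 2 / (1 + y) +
        (max (max (1 / 2) (1 - x)) (max (1 - y) (1 - z))) ^ 2 /
          (1 + max (max (1 / 2) (1 - x)) (max (1 - y) (1 - z)))) ≥ 3 := by
  obtain ⟨hx0, hx1⟩ := hx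
  obtain ⟨hy0, hy1⟩ := hy
  obtain ⟨hz0, hz1⟩ := hz
  set m := max (max (1 / 2) (1 - x)) (max (1 - y) (1 - z)) with hm
  have hm0 : 1/2 ≤ m := le_trans (le_max_left _ _) (le_max_left _ _)
  have hmx : 1 - x ≤ m := le_trans (le_max_right _ _) (le_max_left _ _)
  have hmy : 1 - y ≤ m := le_trans (le_max_left _ _) (le_max_right _ _)
  have hm1 : m ≤ 1 := by
    apply max_le <;> apply max_le <;> linarith
  have := aux x y m hx0 hx1 hy0 hy1 hm0 hm1 hmx hmy
  linarith
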